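/- Let 0 < δ < 1, ξ₁ = (1+√(1-(1-δ)²))/(1-δ), and for integers x with x ≤ 0 define p₁(x) = 1 - ξ₁ˣ/2 and p₂(x) = ξ₁ˣ/2. Then p₁(x), p₂(x) ∈ [0,1], p₁(x)+p₂(x)=1, p₁(0)=p₂(0)=1/2, and with f(x) = ξ₁ˣ/(ξ₁-1/ξ₁) one has for every x < 0: f(x) = (1-δ)(f(x-1)+1-p₁(x)) = (1-δ)(f(x+1)-p₂(x)). -/

import Mathlib

theorem stmt_5 (δ : ℝ) (hδ0 : 0 < δ) (hδ1 : δ < 1)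
    (ξ₁ : ℝ) (hξ₁ : ξ₁ = (1 + Real.sqrt (1 - (1 - δ) ^ 2)) / (1 - δ))
    (p₁ p₂ : ℤ → ℝ) (hp₁ : ∀ x : ℤ, p₁ x = 1 - ξ₁ ^ x / 2)
    (hp₂ : ∀ x : ℤ, p₂ x = ξ₁ ^ x / 2)
    (f : ℤ → ℝ) (hf : ∀ x : ℤ, f x = ξ₁ ^ x / (ξ₁ - 1 / ξ₁)) :
    (∀ x : ℤ, x ≤ 0 → p₁ x ∈ Set.Icc (0 : ℝ) 1 ∧ p₂ x ∈ Set.Icc (0 : ℝ) 1 ∧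
        p₁ x + p₂ x = 1) ∧
    p₁ 0 = 1 / 2 ∧ p₂ 0 = 1 / 2 ∧
    (∀ x : ℤ, x < 0 →
      f x = (1 - δ) * (f (x - 1) + 1 - p₁ x) ∧
      f x = (1 - δ) * (f (x + 1) - p₂ x)) := by
  have hc0 : (0 : ℝ) < 1 - δ := by linarith
  set s : ℝ := Real.sqrt (1 - (1 - δ) ^ 2) with hsdef
  have hs2 : s ^ 2 = 1 - (1 - δ) ^ 2 := Real.sq_sqrt (by nlinarith)
  have hs0 : 0 < s := Real.sqrt_pos.mpr (by nlinarith)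
  have hξgt : 1 < ξ₁ := by
    rw [hξ₁, lt_div_iff₀ hc0]; linarith
  have hξpos : 0 < ξ₁ := lt_trans one_pos hξgt
  have hξne : ξ₁ ≠ 0 := ne_of_gt hξpos
  have hkey : (1 - δ) * ξ₁ ^ 2 + (1 - δ) = 2 * ξ₁ := by
    rw [hξ₁]
    field_simp
    nlinarith [hs2]
  have hE : ξ₁ ^ 2 - 1 ≠ 0 := by nlinarith
  have hDeq : ξ₁ - 1 / ξ₁ = (ξ₁ ^ 2 - 1) / ξ₁ := by field_simp
  refine ⟨?_, ?_, ?_, ?_⟩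
  · intro x hx
    have hzpos : 0 < ξ₁ ^ x := zpow_pos hξpos x
    have hzle : ξ₁ ^ x ≤ 1 := zpow_le_one_of_nonpos₀ (le_of_lt hξgt) hx
    rw [hp₁ x, hp₂ x]
    refine ⟨⟨by linarith, by linarith⟩, ⟨by linarith, by linarith⟩, by ring⟩
  · rw [hp₁]; norm_num
  · rw [hp₂]; norm_num
  · intro x hx
    have h1 : ξ₁ ^ (x - 1) = ξ₁ ^ x / ξ₁ := by
      rw [zpow_sub₀ hξne, zpow_one]
    have h2 : ξ₁ ^ (x + 1) = ξ₁ ^ x * ξ₁ := by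
      rw [zpow_add₀ hξne, zpow_one]
    constructor
    · rw [hf, hf, hp₁, h1, hDeq]
      field_simp
      ring_nf
      linear_combination (-ξ₁ ^ x) * hkey
    · rw [hf, hf, hp₂, h2, hDeq]
      field_simp
      ring_nf
      linear_combination (-1 : ℝ) * hkey
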